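/- arXiv:2005.06195 — 2 statements merged into one kernel-verified Lean document; each statement's English description precedes it below -/
import Mathlib

section
/- Consider the 2×2 matrix A = [[β, 1−β], [−ηβ, 1−η(1−β)]] arising from gradient descent with momentum on a quadratic. For η ∈ (0,1) and β ∈ [0,1), both eigenvalues of A have absolute value strictly less than 1. -/
open Matrix Polynomial

/-- For `A = [[β, 1−β], [−ηβ, 1−η(1−β)]]` with step size `η ∈ (0,1)` and momentum
`β ∈ [0,1)`, every (complex) eigenvalue of `A` has absolute value strictly less
than `1`. -/
theorem momentum_matrix_eigenvalues_in_unit_disc (η β : ℝ)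
    (hη : η ∈ Set.Ioo (0 : ℝ) 1) (hβ : β ∈ Set.Ico (0 : ℝ) 1)
    (A : Matrix (Fin 2) (Fin 2) ℝ)
    (hA : A = !![β, 1 - β; -η * β, 1 - η * (1 - β)]) :
    ∀ z : ℂ, (A.map Complex.ofReal).charpoly.IsRoot z → ‖z‖ < 1 := by
  obtain ⟨hη0, hη1⟩ := hη
  obtain ⟨hβ0, hβ1⟩ := hβ
  intro z hz
  have heq : z^2 - (((β:ℂ) + (1 - η*(1-β)))) * z + (β:ℂ) = 0 := by
    have h2 := hz
    rw [Matrix.charpoly, Matrix.det_fin_two] at h2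
    simp [Polynomial.IsRoot, charmatrix_apply_eq, charmatrix_apply_ne, hA,
      Matrix.map_apply] at h2
    linear_combination h2
  set t : ℝ := β + (1 - η*(1-β)) with ht
  set x := z.re
  set y := z.im
  have hre : x^2 - y^2 - t*x + β = 0 := by
    have := congrArg Complex.re heq
    simpa [pow_two, Complex.mul_re, Complex.add_re, Complex.sub_re, ht] using this
  have him : 2*x*y - t*y = 0 := by
    have := congrArg Complex.im heq
    simp [pow_two, Complex.mul_im, Complex.add_im, Complex.sub_im, ht] at this
    linear_combination this
  have h1b : (0:ℝ) < 1 - β := by linarith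
  have key : x^2 + y^2 < 1 := by
    rcases mul_eq_zero.mp (show y * (2*x - t) = 0 by linear_combination him) with hy | hx
    · -- y = 0 : real root case
      rw [hy] at hre ⊢
      have hp1 : 0 < 1 - t + β := by
        have p1 : 1 - t + β = η * (1-β) := by rw [ht]; ring
        rw [p1]; positivity
      have hp2 : 0 < 1 + t + β := by nlinarith
      have hx1 : x < 1 := by nlinarith [sq_nonneg (x - 1), sq_nonneg x]
      have hx2 : -1 < x := by nlinarith [sq_nonneg (x + 1), sq_nonneg x]
      nlinarith
    · -- 2x = t : conjugate pair, |z|² = β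
      have hx' : t = 2*x := by linarith
      have htx : t * x = 2 * x^2 := by rw [hx']; ring
      nlinarith [hre, htx]
  have habs := Complex.sq_norm z
  have hnn := norm_nonneg z
  nlinarith [habs, Complex.normSq_apply z, key, hnn]
end

section
/- With the same setup, the derivative of the ReLU loss with respect to the bias satisfies ∂L/∂b = ã_L φ(b/‖w‖) + c Φ(b/‖w‖). -/
open MeasureTheory ProbabilityTheory Matrix
open scoped ENNReal NNReal

/-- The standard multivariate Gaussian `N(0, I_L)` on `ℝ^L`. -/
noncomputable def stdGaussian (L : ℕ) : Measure (Fin L → ℝ) :=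
  Measure.pi fun _ => gaussianReal 0 1

/-- Euclidean norm of a vector in `ℝ^L`. -/
noncomputable def l2norm {L : ℕ} (v : Fin L → ℝ) : ℝ :=
  Real.sqrt (∑ i, (v i) ^ 2)

/-- The standard normal pdf `φ`. -/
noncomputable def phiPdf (t : ℝ) : ℝ :=
  Real.exp (-t ^ 2 / 2) / Real.sqrt (2 * Real.pi)

/-- The standard normal CDF `Φ`. -/
noncomputable def Phi (t : ℝ) : ℝ :=
  ∫ s in Set.Iic t, phiPdf s

/-! ### Auxiliary 1-D lemmas -/

open Real Set Filter in
lemma gaussianPDFReal_eq_phiPdf : gaussianPDFReal 0 1 = phiPdf := by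
  funext x
  simp only [gaussianPDFReal, phiPdf, NNReal.coe_one, mul_one, sub_zero, div_eq_mul_inv]
  ring

lemma phiPdf_nonneg (t : ℝ) : 0 ≤ phiPdf t :=
  div_nonneg (Real.exp_pos _).le (Real.sqrt_nonneg _)

lemma phiPdf_neg (t : ℝ) : phiPdf (-t) = phiPdf t := by simp [phiPdf]

lemma measurable_phiPdf : Measurable phiPdf := by
  rw [← gaussianPDFReal_eq_phiPdf]; exact measurable_gaussianPDFReal 0 1

lemma integrable_phiPdf : Integrable phiPdf := by
  rw [← gaussianPDFReal_eq_phiPdf]; exact integrable_gaussianPDFReal 0 1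

lemma integral_phiPdf : ∫ t, phiPdf t = 1 := by
  rw [← gaussianPDFReal_eq_phiPdf]; exact integral_gaussianPDFReal_eq_one 0 one_ne_zero

lemma integrable_id_mul_phiPdf : Integrable (fun t : ℝ => t * phiPdf t) := by
  have h := (integrable_mul_exp_neg_mul_sq (b := (1:ℝ)/2) (by norm_num)).mul_const
    ((Real.sqrt (2 * Real.pi))⁻¹)
  have he : (fun t : ℝ => t * phiPdf t)
      = fun t : ℝ => t * Real.exp (-(1/2) * t ^ 2) * (Real.sqrt (2 * Real.pi))⁻¹ := by
    funext t
    rw [phiPdf, div_eq_mul_inv]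
    ring_nf
  rw [he]; exact h

lemma hasDerivAt_neg_phiPdf (x : ℝ) :
    HasDerivAt (fun t : ℝ => -phiPdf t) (x * phiPdf x) x := by
  have h1 : HasDerivAt (fun t : ℝ => -t ^ 2 / 2) (-x) x := by
    have := ((hasDerivAt_pow 2 x).neg).div_const 2
    refine this.congr_deriv ?_
    push_cast; ring
  have h2 := (h1.exp).div_const (Real.sqrt (2 * Real.pi))
  have h3 := h2.neg
  refine h3.congr_deriv ?_
  simp only [phiPdf]; ring

open Filter in
lemma tendsto_phiPdf_atTop : Tendsto phiPdf atTop (nhds 0) := by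
  have h1 : Tendsto (fun t : ℝ => -t ^ 2 / 2) atTop atBot := by
    apply Tendsto.atBot_div_const (by norm_num : (0:ℝ) < 2)
    exact tendsto_neg_atTop_atBot.comp (tendsto_pow_atTop two_ne_zero)
  have h2 := (Real.tendsto_exp_atBot.comp h1).div_const (Real.sqrt (2 * Real.pi))
  rw [zero_div] at h2
  exact h2

lemma integral_id_mul_phiPdf_Ioi (u : ℝ) :
    ∫ t in Set.Ioi u, t * phiPdf t = phiPdf u := by
  have := integral_Ioi_of_hasDerivAt_of_tendsto' (a := u)
    (f := fun t : ℝ => -phiPdf t) (f' := fun t : ℝ => t * phiPdf t)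
    (fun x _ => hasDerivAt_neg_phiPdf x)
    integrable_id_mul_phiPdf.integrableOn
    tendsto_phiPdf_atTop.neg
  simpa using this

lemma integral_id_mul_phiPdf : ∫ t, t * phiPdf t = 0 := by
  have hIic : ∫ t in Set.Iic (0:ℝ), t * phiPdf t = -phiPdf 0 := by
    have h := integral_comp_neg_Ioi (c := (0:ℝ)) (f := fun t : ℝ => t * phiPdf t)
    simp only [neg_zero] at h
    rw [← h]
    have : (fun x : ℝ => -x * phiPdf (-x)) = fun x : ℝ => -(x * phiPdf x) := by
      funext x; rw [phiPdf_neg]; ring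
    calc ∫ x in Set.Ioi (0:ℝ), -x * phiPdf (-x)
        = ∫ x in Set.Ioi (0:ℝ), -(x * phiPdf x) := by rw [this]
      _ = -∫ x in Set.Ioi (0:ℝ), x * phiPdf x := integral_neg _
      _ = -phiPdf 0 := by rw [integral_id_mul_phiPdf_Ioi]
  rw [← intervalIntegral.integral_Iic_add_Ioi (b := (0:ℝ))
    integrable_id_mul_phiPdf.integrableOn
    integrable_id_mul_phiPdf.integrableOn, hIic, integral_id_mul_phiPdf_Ioi]
  ring

lemma Phi_eq_integral_Ioi (u : ℝ) : ∫ t in Set.Ioi (-u), phiPdf t = Phi u := by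
  rw [Phi, ← integral_comp_neg_Iic]
  congr 1
  funext t
  rw [phiPdf_neg]

/-! ### The product density representation of the standard Gaussian -/

lemma indicator_box_prod {n : ℕ} (s : Fin n → Set ℝ) (x : Fin n → ℝ) :
    Set.indicator (Set.univ.pi s) (fun x : Fin n → ℝ => ∏ i, phiPdf (x i)) x
      = ∏ i, Set.indicator (s i) phiPdf (x i) := by
  by_cases hx : x ∈ Set.univ.pi s
  · rw [Set.indicator_of_mem hx]
    exact Finset.prod_congr rfl fun i _ =>
      (Set.indicator_of_mem (hx i (Set.mem_univ i)) _).symm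
  · rw [Set.indicator_of_notMem hx]
    rw [Set.mem_univ_pi] at hx
    push_neg at hx
    obtain ⟨i, hi⟩ := hx
    exact (Finset.prod_eq_zero (Finset.mem_univ i) (Set.indicator_of_notMem hi _)).symm

lemma integrable_indicator_box_prod {n : ℕ} (s : Fin n → Set ℝ)
    (hs : ∀ i, MeasurableSet (s i)) :
    Integrable (fun x : Fin n → ℝ => ∏ i, Set.indicator (s i) phiPdf (x i)) :=
  Integrable.fintype_prod fun i => integrable_phiPdf.indicator (hs i)

lemma stdGaussian_eq_withDensity (n : ℕ) :
    stdGaussian n = (volume : Measure (Fin n → ℝ)).withDensity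
      (fun x => ENNReal.ofReal (∏ i, phiPdf (x i))) := by
  rw [_root_.stdGaussian]
  refine Measure.pi_eq (μ := fun _ : Fin n => gaussianReal 0 1) fun s hs => ?_
  have hbox : MeasurableSet (Set.univ.pi s) := MeasurableSet.univ_pi hs
  rw [withDensity_apply _ hbox]
  have hInt : IntegrableOn (fun x : Fin n → ℝ => ∏ i, phiPdf (x i)) (Set.univ.pi s) := by
    rw [← integrable_indicator_iff hbox]
    have := integrable_indicator_box_prod s hs
    refine this.congr (Filter.Eventually.of_forall fun x => ?_)
    exact (indicator_box_prod s x).symm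
  have hnn : 0 ≤ᵐ[(volume : Measure (Fin n → ℝ)).restrict (Set.univ.pi s)]
      fun x : Fin n → ℝ => ∏ i, phiPdf (x i) :=
    Filter.Eventually.of_forall fun x => Finset.prod_nonneg fun i _ => phiPdf_nonneg _
  rw [← ofReal_integral_eq_lintegral_ofReal hInt hnn]
  have h1 : ∫ x in Set.univ.pi s, ∏ i, phiPdf (x i)
      = ∏ i, ∫ t in s i, phiPdf t := by
    rw [← integral_indicator hbox]
    have : ∀ x : Fin n → ℝ, Set.indicator (Set.univ.pi s)
        (fun x : Fin n → ℝ => ∏ i, phiPdf (x i)) x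
        = ∏ i, Set.indicator (s i) phiPdf (x i) := indicator_box_prod s
    rw [integral_congr_ae (Filter.Eventually.of_forall this)]
    rw [MeasureTheory.integral_fintype_prod_volume_eq_prod (f := fun i => Set.indicator (s i) phiPdf)]
    exact Finset.prod_congr rfl fun i _ => integral_indicator (hs i)
  rw [h1, ENNReal.ofReal_prod_of_nonneg fun i _ =>
    setIntegral_nonneg (hs i) fun t _ => phiPdf_nonneg t]
  exact Finset.prod_congr rfl fun i _ => by
    rw [gaussianReal_apply_eq_integral 0 one_ne_zero, gaussianPDFReal_eq_phiPdf]

/-! ### The coordinatewise factor functions -/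

/-- Factor functions for the "constant" term. -/
noncomputable def relu_f0 {n : ℕ} (u : ℝ) (ℓ j : Fin n) : ℝ → ℝ :=
  if j = ℓ then Set.indicator (Set.Ioi u) phiPdf else phiPdf

/-- Factor functions for the `i`-th linear term. -/
noncomputable def relu_f1 {n : ℕ} (u : ℝ) (ℓ i j : Fin n) : ℝ → ℝ :=
  if j = i then (fun t => t * relu_f0 u ℓ j t) else relu_f0 u ℓ j

lemma relu_f0_integrable {n : ℕ} (u : ℝ) (ℓ j : Fin n) : Integrable (relu_f0 u ℓ j) := by
  unfold relu_f0
  split_ifs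
  · exact integrable_phiPdf.indicator measurableSet_Ioi
  · exact integrable_phiPdf

lemma id_mul_indicator_eq {u : ℝ} :
    (fun t : ℝ => t * Set.indicator (Set.Ioi u) phiPdf t)
      = Set.indicator (Set.Ioi u) (fun t => t * phiPdf t) := by
  funext t
  by_cases ht : t ∈ Set.Ioi u
  · rw [Set.indicator_of_mem ht, Set.indicator_of_mem ht]
  · rw [Set.indicator_of_notMem ht, Set.indicator_of_notMem ht, mul_zero]

lemma relu_f1_integrable {n : ℕ} (u : ℝ) (ℓ i j : Fin n) : Integrable (relu_f1 u ℓ i j) := by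
  unfold relu_f1 relu_f0
  split_ifs
  · rw [id_mul_indicator_eq]
    exact integrable_id_mul_phiPdf.indicator measurableSet_Ioi
  · exact integrable_id_mul_phiPdf
  · exact integrable_phiPdf.indicator measurableSet_Ioi
  · exact integrable_phiPdf

lemma relu_f0_integral_self {n : ℕ} (u : ℝ) (ℓ : Fin n) :
    ∫ t, relu_f0 u ℓ ℓ t = ∫ t in Set.Ioi u, phiPdf t := by
  simp only [relu_f0, if_pos rfl]
  exact integral_indicator measurableSet_Ioi

lemma relu_f0_integral_ne {n : ℕ} (u : ℝ) {ℓ j : Fin n} (h : j ≠ ℓ) :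
    ∫ t, relu_f0 u ℓ j t = 1 := by
  simp only [relu_f0, if_neg h]
  exact integral_phiPdf

/-! ### Main theorem -/

/-- With `x ~ N(0, I_L)`, `U` orthogonal mapping `w ≠ 0` to `‖w‖ e_L`, `a = w − Γ`,
`c = b − Δ`, `ã = U a`, and bias derivative `∂L/∂b = E[1_{wᵀx+b>0}(aᵀx+c)]`:
`∂L/∂b = ã_L φ(b/‖w‖) + c Φ(b/‖w‖)`. -/
theorem relu_gradient_bias (L : ℕ) (w Γ : Fin (L + 1) → ℝ) (hw : w ≠ 0) (b Δ : ℝ)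
    (U : Matrix (Fin (L + 1)) (Fin (L + 1)) ℝ) (hU : Uᵀ * U = 1)
    (hUw : U.mulVec w = Pi.single (Fin.last L) (l2norm w)) :
    (∫ x, Set.indicator {x | w ⬝ᵥ x + b > 0}
        (fun x => (w - Γ) ⬝ᵥ x + (b - Δ)) x ∂ stdGaussian (L + 1)) =
      U.mulVec (w - Γ) (Fin.last L) * phiPdf (b / l2norm w) +
        (b - Δ) * Phi (b / l2norm w) := by
  classical
  set a : Fin (L + 1) → ℝ := w - Γ with ha
  set c : ℝ := b - Δ with hc
  set sw : ℝ := l2norm w with hsw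
  have hswpos : 0 < sw := by
    rw [hsw, l2norm]
    apply Real.sqrt_pos.mpr
    have hex : ∃ i, w i ≠ 0 := by
      by_contra h
      push_neg at h
      exact hw (funext h)
    obtain ⟨i, hi⟩ := hex
    exact Finset.sum_pos' (fun j _ => sq_nonneg _)
      ⟨i, Finset.mem_univ i, by positivity⟩
  set u : ℝ := -(b / sw) with hu
  set ℓ : Fin (L + 1) := Fin.last L with hℓ
  set av : Fin (L + 1) → ℝ := U.mulVec a with hav
  set D : (Fin (L + 1) → ℝ) → ℝ := fun x => ∏ i, phiPdf (x i) with hD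
  have hDnn : ∀ x, 0 ≤ D x := fun x => Finset.prod_nonneg fun i _ => phiPdf_nonneg _
  have hDmeas : Measurable D :=
    Finset.measurable_prod _ fun i _ => measurable_phiPdf.comp (measurable_pi_apply i)
  set g : (Fin (L + 1) → ℝ) → ℝ :=
    Set.indicator {x | w ⬝ᵥ x + b > 0} (fun x => a ⬝ᵥ x + c) with hg
  have hwmeas : Measurable fun x : Fin (L + 1) → ℝ => w ⬝ᵥ x + b := by
    apply Measurable.add_const
    show Measurable fun x : Fin (L + 1) → ℝ => ∑ i, w i * x i
    exact Finset.measurable_sum _ fun i _ => (measurable_const_mul (w i)).comp (measurable_pi_apply i)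
  have hameas : Measurable fun x : Fin (L + 1) → ℝ => a ⬝ᵥ x + c := by
    apply Measurable.add_const
    show Measurable fun x : Fin (L + 1) → ℝ => ∑ i, a i * x i
    exact Finset.measurable_sum _ fun i _ => (measurable_const_mul (a i)).comp (measurable_pi_apply i)
  have hset : MeasurableSet {x : Fin (L + 1) → ℝ | w ⬝ᵥ x + b > 0} :=
    measurableSet_lt measurable_const hwmeas
  have hgmeas : Measurable g := hameas.indicator hset
  -- Step 1: go to Lebesgue measure with density
  rw [stdGaussian_eq_withDensity]
  have hof : (fun x : Fin (L + 1) → ℝ => ENNReal.ofReal (D x))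
      = fun x => ((fun x => Real.toNNReal (D x)) x : ℝ≥0∞) := rfl
  have step1 : (∫ x, g x ∂ (volume : Measure (Fin (L + 1) → ℝ)).withDensity
        (fun x => ENNReal.ofReal (D x)))
      = ∫ x, D x * g x := by
    rw [hof, integral_withDensity_eq_integral_smul hDmeas.real_toNNReal g]
    apply integral_congr_ae
    apply Filter.Eventually.of_forall
    intro x
    show (D x).toNNReal • g x = D x * g x
    rw [NNReal.smul_def, Real.coe_toNNReal _ (hDnn x), smul_eq_mul]
  rw [step1]
  -- Step 2: change of variables by the orthogonal matrix Uᵀ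
  have hUUt : U * Uᵀ = 1 := mul_eq_one_comm.mp hU
  have hdet2 : U.det * U.det = 1 := by
    have := congrArg Matrix.det hU
    rwa [Matrix.det_mul, Matrix.det_transpose, Matrix.det_one] at this
  have habs : |U.det| = 1 := by
    rcases mul_self_eq_one_iff.mp hdet2 with h | h <;> rw [h] <;> norm_num
  have hdetMne : (Uᵀ).det ≠ 0 := by
    rw [Matrix.det_transpose]
    intro h
    rw [h, mul_zero] at hdet2
    exact one_ne_zero hdet2.symm
  have hmap : Measure.map (Matrix.toLin' Uᵀ) (volume : Measure (Fin (L + 1) → ℝ))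
      = volume := by
    rw [Real.map_matrix_volume_pi_eq_smul_volume_pi hdetMne]
    rw [abs_inv, Matrix.det_transpose, habs]
    norm_num
  have hH : Measurable fun x : Fin (L + 1) → ℝ => D x * g x := hDmeas.mul hgmeas
  have step2 : (∫ x, D x * g x)
      = ∫ y, D (Uᵀ.mulVec y) * g (Uᵀ.mulVec y) := by
    conv_lhs => rw [← hmap]
    rw [integral_map (Measurable.aemeasurable (by
      exact (Matrix.toLin' Uᵀ).continuous_of_finiteDimensional.measurable))
      (by rw [hmap]; exact hH.aestronglyMeasurable)]
    apply integral_congr_ae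
    apply Filter.Eventually.of_forall
    intro y
    show D ((Matrix.toLin' Uᵀ) y) * g ((Matrix.toLin' Uᵀ) y) = D (Uᵀ.mulVec y) * g (Uᵀ.mulVec y)
    rw [Matrix.toLin'_apply]
  rw [step2]
  -- Pointwise identities after the change of variables
  have hdotv : ∀ v y : Fin (L + 1) → ℝ, v ⬝ᵥ (Uᵀ.mulVec y) = (U.mulVec v) ⬝ᵥ y := by
    intro v y
    rw [Matrix.dotProduct_mulVec, Matrix.vecMul_transpose]
  have hDinv : ∀ y, D (Uᵀ.mulVec y) = D y := by
    intro y
    have hsum : ∑ i, (Uᵀ.mulVec y i) ^ 2 = ∑ i, (y i) ^ 2 := by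
      have hsq : ∀ v : Fin (L + 1) → ℝ, ∑ i, (v i) ^ 2 = v ⬝ᵥ v := by
        intro v
        simp [dotProduct, sq]
      rw [hsq, hsq]
      calc (Uᵀ.mulVec y) ⬝ᵥ (Uᵀ.mulVec y)
          = (U.mulVec (Uᵀ.mulVec y)) ⬝ᵥ y := hdotv _ y
        _ = ((U * Uᵀ).mulVec y) ⬝ᵥ y := by rw [Matrix.mulVec_mulVec]
        _ = y ⬝ᵥ y := by rw [hUUt, Matrix.one_mulVec]
    have hprodexp : ∀ v : Fin (L + 1) → ℝ, ∏ i, phiPdf (v i)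
        = Real.exp (-(∑ i, (v i) ^ 2) / 2) / (Real.sqrt (2 * Real.pi)) ^ (L + 1) := by
      intro v
      simp only [phiPdf]
      rw [Finset.prod_div_distrib, Finset.prod_const, ← Real.exp_sum]
      congr 2
      · rw [← Finset.sum_div, ← Finset.sum_neg_distrib]
      · simp [Finset.card_univ]
    rw [hD]
    simp only
    rw [hprodexp, hprodexp, hsum]
  -- membership rewriting
  have hmemiff : ∀ y : Fin (L + 1) → ℝ,
      (Uᵀ.mulVec y ∈ {x | w ⬝ᵥ x + b > 0}) ↔ y ℓ ∈ Set.Ioi u := by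
    intro y
    have h1 : w ⬝ᵥ (Uᵀ.mulVec y) = sw * y ℓ := by
      rw [hdotv, hUw, single_dotProduct]
    simp only [Set.mem_setOf_eq, Set.mem_Ioi, h1]
    have h2 : u < y ℓ ↔ -b < sw * y ℓ := by
      rw [hu, ← neg_div, div_lt_iff₀ hswpos, mul_comm]
    constructor
    · intro h; exact h2.mpr (by linarith)
    · intro h; linarith [h2.mp h]
  set ind : ℝ → ℝ := Set.indicator (Set.Ioi u) (fun _ => (1 : ℝ)) with hind
  -- product splitting identities
  have hp0 : ∀ y : Fin (L + 1) → ℝ,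
      ∏ j, relu_f0 u ℓ j (y j) = ind (y ℓ) * D y := by
    intro y
    have : ∀ j, relu_f0 u ℓ j (y j)
        = (if j = ℓ then ind (y j) else 1) * phiPdf (y j) := by
      intro j
      unfold relu_f0
      split_ifs with h
      · by_cases ht : y j ∈ Set.Ioi u
        · rw [Set.indicator_of_mem ht, hind, Set.indicator_of_mem ht, one_mul]
        · rw [Set.indicator_of_notMem ht, hind, Set.indicator_of_notMem ht, zero_mul]
      · rw [one_mul]
    rw [Finset.prod_congr rfl fun j _ => this j, Finset.prod_mul_distrib,
      Finset.prod_ite_eq' Finset.univ ℓ (fun j => ind (y j))]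
    simp [hD]
  have hp1 : ∀ (i : Fin (L + 1)) (y : Fin (L + 1) → ℝ),
      ∏ j, relu_f1 u ℓ i j (y j) = y i * (ind (y ℓ) * D y) := by
    intro i y
    have : ∀ j, relu_f1 u ℓ i j (y j)
        = (if j = i then y j else 1) * relu_f0 u ℓ j (y j) := by
      intro j
      unfold relu_f1
      split_ifs with h
      · rfl
      · rw [one_mul]
    rw [Finset.prod_congr rfl fun j _ => this j, Finset.prod_mul_distrib,
      Finset.prod_ite_eq' Finset.univ i (fun j => y j), hp0 y]
    simp
  -- Step 3: rewrite the integrand into the sum-of-products form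
  have step3 : (fun y : Fin (L + 1) → ℝ => D (Uᵀ.mulVec y) * g (Uᵀ.mulVec y))
      = fun y => (∑ i, av i * ∏ j, relu_f1 u ℓ i j (y j))
          + c * ∏ j, relu_f0 u ℓ j (y j) := by
    funext y
    rw [hDinv y]
    by_cases hmem : y ℓ ∈ Set.Ioi u
    · have hmem' : Uᵀ.mulVec y ∈ {x | w ⬝ᵥ x + b > 0} := (hmemiff y).mpr hmem
      rw [hg, Set.indicator_of_mem hmem']
      have hval : a ⬝ᵥ (Uᵀ.mulVec y) = av ⬝ᵥ y := by rw [hdotv, hav]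
      rw [hval]
      have hdotav : av ⬝ᵥ y = ∑ i, av i * y i := rfl
      have hindone : ind (y ℓ) = 1 := Set.indicator_of_mem hmem _
      have hsum2 : ∑ i, av i * ∏ j, relu_f1 u ℓ i j (y j)
          = (∑ i, av i * y i) * D y := by
        rw [Finset.sum_mul]
        refine Finset.sum_congr rfl fun i _ => ?_
        rw [hp1 i y, hindone]
        ring
      rw [hsum2, hp0 y, hindone, hdotav]
      ring
    · have hmem' : Uᵀ.mulVec y ∉ {x | w ⬝ᵥ x + b > 0} := fun h => hmem ((hmemiff y).mp h)
      rw [hg, Set.indicator_of_notMem hmem']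
      have hindzero : ind (y ℓ) = 0 := Set.indicator_of_notMem hmem _
      have hsum2 : ∑ i, av i * ∏ j, relu_f1 u ℓ i j (y j) = 0 := by
        refine Finset.sum_eq_zero fun i _ => ?_
        rw [hp1 i y, hindzero]
        ring
      rw [hsum2, hp0 y, hindzero]
      ring
  rw [step3]
  -- Step 4: compute the integral
  have hint1 : ∀ i : Fin (L + 1),
      Integrable (fun y : Fin (L + 1) → ℝ => ∏ j, relu_f1 u ℓ i j (y j)) :=
    fun i => Integrable.fintype_prod fun j => relu_f1_integrable u ℓ i j
  have hint0 : Integrable (fun y : Fin (L + 1) → ℝ => ∏ j, relu_f0 u ℓ j (y j)) :=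
    Integrable.fintype_prod fun j => relu_f0_integrable u ℓ j
  rw [integral_add (integrable_finset_sum _ fun i _ => (hint1 i).const_mul (av i))
    (hint0.const_mul c)]
  rw [integral_finset_sum _ fun i _ => (hint1 i).const_mul (av i)]
  have hI0 : ∫ y : Fin (L + 1) → ℝ, ∏ j, relu_f0 u ℓ j (y j) = Phi (b / sw) := by
    rw [MeasureTheory.integral_fintype_prod_volume_eq_prod (f := fun j => relu_f0 u ℓ j)]
    rw [Finset.prod_eq_single ℓ (fun j _ hj => relu_f0_integral_ne u hj)
      (fun h => absurd (Finset.mem_univ ℓ) h)]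
    rw [relu_f0_integral_self, ← Phi_eq_integral_Ioi (b / sw)]
  have hI1 : ∀ i : Fin (L + 1),
      ∫ y : Fin (L + 1) → ℝ, ∏ j, relu_f1 u ℓ i j (y j)
        = if i = ℓ then phiPdf (b / sw) else 0 := by
    intro i
    rw [MeasureTheory.integral_fintype_prod_volume_eq_prod (f := fun j => relu_f1 u ℓ i j)]
    by_cases hiℓ : i = ℓ
    · subst hiℓ
      rw [if_pos rfl]
      rw [Finset.prod_eq_single ℓ (fun j _ hj => by
        rw [show relu_f1 u ℓ ℓ j = relu_f0 u ℓ j from if_neg hj]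
        exact relu_f0_integral_ne u hj)
        (fun h => absurd (Finset.mem_univ ℓ) h)]
      rw [show relu_f1 u ℓ ℓ ℓ = fun t => t * relu_f0 u ℓ ℓ t from if_pos rfl]
      have : (fun t : ℝ => t * relu_f0 u ℓ ℓ t)
          = Set.indicator (Set.Ioi u) (fun t => t * phiPdf t) := by
        rw [show relu_f0 u ℓ ℓ = Set.indicator (Set.Ioi u) phiPdf from if_pos rfl]
        exact id_mul_indicator_eq
      rw [this, integral_indicator measurableSet_Ioi, integral_id_mul_phiPdf_Ioi,
        hu, phiPdf_neg]
    · rw [if_neg hiℓ]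
      refine Finset.prod_eq_zero (Finset.mem_univ i) ?_
      rw [show relu_f1 u ℓ i i = fun t => t * relu_f0 u ℓ i t from if_pos rfl]
      rw [show relu_f0 u ℓ i = phiPdf from if_neg hiℓ]
      exact integral_id_mul_phiPdf
  have hsumfin : ∑ i, av i * ∫ y : Fin (L + 1) → ℝ, ∏ j, relu_f1 u ℓ i j (y j)
      = av ℓ * phiPdf (b / sw) := by
    rw [Finset.sum_congr rfl fun i _ => by rw [hI1 i]]
    rw [Finset.sum_eq_single ℓ (fun i _ hi => by rw [if_neg hi, mul_zero])
      (fun h => absurd (Finset.mem_univ ℓ) h)]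
    rw [if_pos rfl]
  calc (∑ i, ∫ y : Fin (L + 1) → ℝ, av i * ∏ j, relu_f1 u ℓ i j (y j))
        + ∫ y : Fin (L + 1) → ℝ, c * ∏ j, relu_f0 u ℓ j (y j)
      = (∑ i, av i * ∫ y : Fin (L + 1) → ℝ, ∏ j, relu_f1 u ℓ i j (y j))
        + c * ∫ y : Fin (L + 1) → ℝ, ∏ j, relu_f0 u ℓ j (y j) := by
        rw [integral_const_mul]
        exact congrArg (· + _) (Finset.sum_congr rfl fun i _ => integral_const_mul _ _)
    _ = av ℓ * phiPdf (b / sw) + c * Phi (b / sw) := by rw [hsumfin, hI0]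
    _ = U.mulVec (w - Γ) (Fin.last L) * phiPdf (b / l2norm w)
        + (b - Δ) * Phi (b / l2norm w) := rfl
end
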